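/- Let X be a zero-dimensional (equivalently, totally disconnected) compact Hausdorff space and let C(X) be the Banach algebra of all continuous scalar-valued (real or complex) functions on X with the supremum norm and pointwise multiplication. Then multiplication in C(X) is uniformly open; in fact, for every ε > 0 and all f, g ∈ C(X), one has B(fg, ε²/4) ⊆ B(f, ε)·B(g, ε). -/

import Mathlib

open Pointwise

lemma exists_isClopen_between {X : Type*} [TopologicalSpace X] [T2Space X] [CompactSpace X]
    [TotallyDisconnectedSpace X] {K U : Set X} (hK : IsCompact K) (hU : IsOpen U)
    (hKU : K ⊆ U) : ∃ V : Set X, IsClopen V ∧ K ⊆ V ∧ V ⊆ U := by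
  have : ∀ x ∈ K, ∃ V : Set X, IsClopen V ∧ x ∈ V ∧ V ⊆ U := fun x hx =>
    compact_exists_isClopen_in_isOpen hU (hKU hx)
  choose! V hV hxV hVU using this
  obtain ⟨t, ht⟩ := hK.elim_finite_subcover (fun x : K => V x) (fun x => (hV x x.2).isOpen)
    (fun x hx => Set.mem_iUnion.2 ⟨⟨x, hx⟩, hxV x hx⟩)
  refine ⟨⋃ x ∈ t, V x, ?_, ?_, ?_⟩
  · exact isClopen_biUnion_finset (fun x hx => hV x x.2)
  · intro x hx
    obtain ⟨i, hi, hxi⟩ := Set.mem_iUnion₂.1 (ht hx)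
    exact Set.mem_biUnion hi hxi
  · exact Set.iUnion₂_subset fun i _ => hVU i i.2

/-- If `X` is a zero-dimensional (totally disconnected) compact Hausdorff space, then
multiplication in `C(X)` (real or complex scalars) is uniformly open; in fact
`B(fg, ε²/4) ⊆ B(f, ε) · B(g, ε)` for all `f, g ∈ C(X)` and `ε > 0`. -/
theorem CX_uniformly_open_multiplication
    {𝕜 : Type*} [RCLike 𝕜] {X : Type*} [TopologicalSpace X] [CompactSpace X]
    [T2Space X] [TotallyDisconnectedSpace X] :
    ∀ (f g : C(X, 𝕜)), ∀ ε > 0,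
      Metric.ball (f * g) (ε ^ 2 / 4) ⊆ Metric.ball f ε * Metric.ball g ε := by
  classical
  intro f g ε hε h hh
  rw [Metric.mem_ball] at hh
  have key : ∀ x, ‖h x - f x * g x‖ < ε ^ 2 / 4 := fun x => by
    have := ContinuousMap.dist_apply_le_dist (f := h) (g := f * g) x
    rw [dist_eq_norm] at this
    simpa using lt_of_le_of_lt this hh
  -- clopen set for f
  obtain ⟨V₁, hV₁, hKV₁, hV₁U⟩ := exists_isClopen_between (X := X)
    (K := {x | ε/3 ≤ ‖f x‖}) (U := {x | ε/4 < ‖f x‖})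
    ((isClosed_le continuous_const (f.continuous.norm)).isCompact)
    (isOpen_lt continuous_const (f.continuous.norm))
    (fun x hx => by simp only [Set.mem_setOf_eq] at hx ⊢; linarith)
  obtain ⟨V₂, hV₂, hKV₂, hV₂U⟩ := exists_isClopen_between (X := X)
    (K := {x | ε/3 ≤ ‖g x‖}) (U := {x | ε/4 < ‖g x‖})
    ((isClosed_le continuous_const (g.continuous.norm)).isCompact)
    (isOpen_lt continuous_const (g.continuous.norm))
    (fun x hx => by simp only [Set.mem_setOf_eq] at hx ⊢; linarith)
  have hfbig : ∀ x ∈ V₁, ε/4 < ‖f x‖ := fun x hx => hV₁U hx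
  have hgbig : ∀ x ∈ V₂, ε/4 < ‖g x‖ := fun x hx => hV₂U hx
  have hfsmall : ∀ x, x ∉ V₁ → ‖f x‖ < ε/3 := fun x hx => by
    by_contra hc; exact hx (hKV₁ (le_of_not_gt hc))
  have hgsmall : ∀ x, x ∉ V₂ → ‖g x‖ < ε/3 := fun x hx => by
    by_contra hc; exact hx (hKV₂ (le_of_not_gt hc))
  have hf0 : ∀ x ∈ V₁, f x ≠ 0 := fun x hx => by
    have := hfbig x hx; intro h0; rw [h0, norm_zero] at this; linarith
  have hg0 : ∀ x ∈ V₂, g x ≠ 0 := fun x hx => by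
    have := hgbig x hx; intro h0; rw [h0, norm_zero] at this; linarith
  set s : 𝕜 := ((3*ε/5 : ℝ) : 𝕜) with hs
  have hns : ‖s‖ = 3*ε/5 := by
    rw [hs, RCLike.norm_ofReal, abs_of_pos (by linarith)]
  have hs0 : s ≠ 0 := by
    rw [hs, Ne, RCLike.ofReal_eq_zero]; intro h0; linarith
  set F : X → 𝕜 := fun x => if x ∈ V₁ then f x else if x ∈ V₂ then h x / g x else s with hF
  set G : X → 𝕜 := fun x => if x ∈ V₁ then h x / f x else if x ∈ V₂ then g x else h x / s with hG
  have hFc : Continuous F := by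
    rw [continuous_iff_continuousAt]
    intro x
    by_cases h1 : x ∈ V₁
    · refine f.continuous.continuousAt.congr ?_
      filter_upwards [hV₁.isOpen.mem_nhds h1] with y hy
      simp [hF, hy]
    by_cases h2 : x ∈ V₂
    · refine (h.continuous.continuousAt.div g.continuous.continuousAt (hg0 x h2)).congr ?_
      filter_upwards [((hV₂.diff hV₁).isOpen).mem_nhds ⟨h2, h1⟩] with y hy
      simp [hF, hy.1, hy.2]
    · refine ContinuousAt.congr (f := fun _ => s) continuousAt_const ?_
      filter_upwards [((hV₁.union hV₂).compl).isOpen.mem_nhds (by simp [h1, h2])] with y hy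
      simp only [Set.mem_compl_iff, Set.mem_union, not_or] at hy
      simp [hF, hy.1, hy.2]
  have hGc : Continuous G := by
    rw [continuous_iff_continuousAt]
    intro x
    by_cases h1 : x ∈ V₁
    · refine (h.continuous.continuousAt.div f.continuous.continuousAt (hf0 x h1)).congr ?_
      filter_upwards [hV₁.isOpen.mem_nhds h1] with y hy
      simp [hG, hy]
    by_cases h2 : x ∈ V₂
    · refine g.continuous.continuousAt.congr ?_
      filter_upwards [((hV₂.diff hV₁).isOpen).mem_nhds ⟨h2, h1⟩] with y hy
      simp [hG, hy.1, hy.2]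
    · refine ((h.continuous.div_const s).continuousAt).congr ?_
      filter_upwards [((hV₁.union hV₂).compl).isOpen.mem_nhds (by simp [h1, h2])] with y hy
      simp only [Set.mem_compl_iff, Set.mem_union, not_or] at hy
      simp [hG, hy.1, hy.2]
  refine Set.mem_mul.2 ⟨⟨F, hFc⟩, ?_, ⟨G, hGc⟩, ?_, ?_⟩
  · -- ‖F - f‖ < ε
    rw [Metric.mem_ball, dist_eq_norm]
    rw [ContinuousMap.norm_lt_iff _ hε]
    intro x
    rw [ContinuousMap.sub_apply]
    show ‖F x - f x‖ < ε
    by_cases h1 : x ∈ V₁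
    · simp [hF, h1, hε]
    by_cases h2 : x ∈ V₂
    · have hgb := hgbig x h2
      have hkx := key x
      have hgpos : (0:ℝ) < ‖g x‖ := by linarith
      have : F x - f x = (h x - f x * g x) / g x := by
        simp only [hF, h1, h2, if_false, if_true]
        field_simp [hg0 x h2]
      rw [this, norm_div, div_lt_iff₀ hgpos]
      nlinarith
    · have hfs := hfsmall x h1
      have : F x = s := by rw [hF]; simp [h1, h2]
      rw [this]
      calc ‖s - f x‖ ≤ ‖s‖ + ‖f x‖ := norm_sub_le _ _
        _ < ε := by rw [hns]; linarith
  · -- ‖G - g‖ < ε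
    rw [Metric.mem_ball, dist_eq_norm]
    rw [ContinuousMap.norm_lt_iff _ hε]
    intro x
    rw [ContinuousMap.sub_apply]
    show ‖G x - g x‖ < ε
    by_cases h1 : x ∈ V₁
    · have hfb := hfbig x h1
      have hkx := key x
      have hfpos : (0:ℝ) < ‖f x‖ := by linarith
      have : G x - g x = (h x - f x * g x) / f x := by
        simp only [hG, h1, if_true]
        field_simp [hf0 x h1]
      rw [this, norm_div, div_lt_iff₀ hfpos]
      nlinarith
    by_cases h2 : x ∈ V₂
    · simp [hG, h1, h2, hε]
    · have hfs := hfsmall x h1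
      have hgs := hgsmall x h2
      have hkx := key x
      have hhx : ‖h x‖ < 13*ε^2/36 := by
        calc ‖h x‖ ≤ ‖h x - f x * g x‖ + ‖f x * g x‖ := by
              simpa using norm_add_le (h x - f x * g x) (f x * g x)
          _ = ‖h x - f x * g x‖ + ‖f x‖ * ‖g x‖ := by rw [norm_mul]
          _ < 13*ε^2/36 := by nlinarith [norm_nonneg (f x), norm_nonneg (g x)]
      have : G x = h x / s := by rw [hG]; simp [h1, h2]
      rw [this]
      have hdiv : ‖h x / s‖ < 65*ε/108 := by
        rw [norm_div, hns, div_lt_iff₀ (by linarith : (0:ℝ) < 3*ε/5)]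
        nlinarith
      calc ‖h x / s - g x‖ ≤ ‖h x / s‖ + ‖g x‖ := norm_sub_le _ _
        _ < ε := by linarith
  · -- product = h
    ext x
    show F x * G x = h x
    by_cases h1 : x ∈ V₁
    · simp only [hF, hG, h1, if_true]
      rw [mul_comm]
      exact div_mul_cancel₀ _ (hf0 x h1)
    by_cases h2 : x ∈ V₂
    · simp only [hF, hG, h1, if_false, h2, if_true]
      exact div_mul_cancel₀ _ (hg0 x h2)
    · simp only [hF, hG, h1, if_false, h2]
      rw [mul_comm]
      exact div_mul_cancel₀ _ hs0
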